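/- Let π be a permutation of {1,…,n} of the form π = 1π' with π' dominant (so that Ess(π) ⊆ L(π)). Then the convex hull ConvHull{e_a − e_{n+b} : (a,b) ∈ Ess(π)} is an exposed face of the polytope Φ(P(Y_π)): there exists a linear functional ℓ : ℝ^{2n} → ℝ such that the set of points of Φ(P(Y_π)) at which ℓ attains its maximum over Φ(P(Y_π)) is exactly ConvHull{e_a − e_{n+b} : (a,b) ∈ Ess(π)}. -/

import Mathlib

open scoped BigOperators

/-- `π` is a permutation of `{1,…,n}` (extended to `ℕ` by fixing all other points). -/
def IsPermOn (n : ℕ) (π : Equiv.Perm ℕ) : Prop :=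
  ∀ i : ℕ, ¬(1 ≤ i ∧ i ≤ n) → π i = i

/-- The Rothe diagram `D(π) = {(π(j), i) : i < j, π(i) > π(j)}`. -/
def RD (π : Equiv.Perm ℕ) : Set (ℕ × ℕ) :=
  {p | ∃ i j : ℕ, i < j ∧ π j < π i ∧ p = (π j, i)}

/-- Two boxes are edge-adjacent: `|i−i'| + |j−j'| = 1`. -/
def AdjBox (p q : ℕ × ℕ) : Prop :=
  (p.1 = q.1 ∧ (p.2 = q.2 + 1 ∨ q.2 = p.2 + 1)) ∨
  (p.2 = q.2 ∧ (p.1 = q.1 + 1 ∨ q.1 = p.1 + 1))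

/-- The dominant piece `dom(π)`: the boxes of `D(π)` joined to `(1,1)` by a path of
edge-adjacent boxes of `D(π)` (empty if `(1,1) ∉ D(π)`). -/
def domPiece (π : Equiv.Perm ℕ) : Set (ℕ × ℕ) :=
  {q | (1, 1) ∈ RD π ∧
    Relation.ReflTransGen (fun a b => b ∈ RD π ∧ AdjBox a b) (1, 1) q}

/-- `NW(π)`: the boxes lying (weakly) northwest of some box of `D(π)`. -/
def NWset (π : Equiv.Perm ℕ) : Set (ℕ × ℕ) :=
  {p | 1 ≤ p.1 ∧ 1 ≤ p.2 ∧ ∃ q ∈ RD π, p.1 ≤ q.1 ∧ p.2 ≤ q.2}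

/-- `L(π) = NW(π) ∖ dom(π)`. -/
def Lset (π : Equiv.Perm ℕ) : Set (ℕ × ℕ) := NWset π \ domPiece π

/-- `L'(π) = L(π) ∖ D(π)`. -/
def L'set (π : Equiv.Perm ℕ) : Set (ℕ × ℕ) := Lset π \ RD π

/-- Fulton's essential set: the southeast corners of `D(π)`. -/
def EssSet (π : Equiv.Perm ℕ) : Set (ℕ × ℕ) :=
  {p | p ∈ RD π ∧ (p.1 + 1, p.2) ∉ RD π ∧ (p.1, p.2 + 1) ∉ RD π}
/-- `π = 1π'` with `π'` dominant: `π(1) = 1` and `D(π)` is the Young diagram of the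
nonempty partition `λ = (lam 1 ≥ … ≥ lam ℓ > 0)` with northwest-most box at `(2,2)`. -/
def DominantOne (π : Equiv.Perm ℕ) (ℓ : ℕ) (lam : ℕ → ℕ) : Prop :=
  π 1 = 1 ∧ 1 ≤ ℓ ∧
  (∀ i j : ℕ, 1 ≤ i → i ≤ j → j ≤ ℓ → lam j ≤ lam i) ∧
  (∀ i : ℕ, 1 ≤ i → i ≤ ℓ → 1 ≤ lam i) ∧
  RD π = {p | ∃ i j : ℕ, 1 ≤ i ∧ i ≤ ℓ ∧ 1 ≤ j ∧ j ≤ lam i ∧ p = (i + 1, j + 1)}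
/-- The vertex `e_i - e_{n+j} ∈ ℝ^{2n}` associated to the (1-indexed) box `(i,j)`. -/
def vtx (n : ℕ) (p : ℕ × ℕ) : Fin (2 * n) → ℝ :=
  fun t => (if (t : ℕ) = p.1 - 1 then 1 else 0) - (if (t : ℕ) = n + p.2 - 1 then 1 else 0)

/- ----------------- auxiliary material ----------------- -/

lemma face_lemma {E : Type*} [AddCommGroup E] [Module ℝ E]
    (S T : Set E) (f : E →ₗ[ℝ] ℝ) (M : ℝ)
    (hTS : T ⊆ S) (hT : T.Nonempty)
    (h1 : ∀ s ∈ S, f s ≤ M)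
    (h2 : ∀ t ∈ T, f t = M)
    (h3 : ∀ s ∈ S, f s = M → s ∈ T) :
    {x ∈ convexHull ℝ S | ∀ y ∈ convexHull ℝ S, f y ≤ f x} = convexHull ℝ T := by
  have hSle : ∀ x ∈ convexHull ℝ S, f x ≤ M := by
    intro x hx
    have : convexHull ℝ S ⊆ f ⁻¹' (Set.Iic M) :=
      convexHull_min (fun s hs => h1 s hs) ((convex_Iic M).linear_preimage f)
    exact this hx
  have hTge : ∀ x ∈ convexHull ℝ T, M ≤ f x := by
    intro x hx
    have : convexHull ℝ T ⊆ f ⁻¹' (Set.Ici M) :=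
      convexHull_min (fun t ht => (h2 t ht).ge) ((convex_Ici M).linear_preimage f)
    exact this hx
  have hTS' : convexHull ℝ T ⊆ convexHull ℝ S := convexHull_mono hTS
  ext x
  constructor
  · rintro ⟨hxS, hmax⟩
    obtain ⟨t, ht⟩ := hT
    have htS : t ∈ convexHull ℝ S := subset_convexHull ℝ S (hTS ht)
    have hfx : f x = M := le_antisymm (hSle x hxS) ((h2 t ht) ▸ hmax t htS)
    rw [convexHull_eq] at hxS
    obtain ⟨ι, u, w, z, hw0, hw1, hz, hx⟩ := hxS
    have hfval : ∑ i ∈ u, w i * f (z i) = M := by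
      have : f (u.centerMass w z) = ∑ i ∈ u, w i * f (z i) := by
        rw [Finset.centerMass, hw1, inv_one, one_smul, map_sum]
        simp [map_smul, smul_eq_mul]
      rw [hx] at this
      rw [← this, hfx]
    have hzero : ∀ i ∈ u, w i * (M - f (z i)) = 0 := by
      have hsum : ∑ i ∈ u, w i * (M - f (z i)) = 0 := by
        have : ∑ i ∈ u, w i * (M - f (z i)) = (∑ i ∈ u, w i) * M - ∑ i ∈ u, w i * f (z i) := by
          rw [Finset.sum_mul, ← Finset.sum_sub_distrib]
          congr 1; ext i; ring
        rw [this, hw1, one_mul, hfval, sub_self]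
      exact (Finset.sum_eq_zero_iff_of_nonneg (fun i hi =>
        mul_nonneg (hw0 i hi) (sub_nonneg.2 (h1 (z i) (hz i hi))))).1 hsum
    rw [← hx, ← Finset.centerMass_filter_ne_zero (z := z)]
    apply Finset.centerMass_mem_convexHull
    · intro i hi
      exact hw0 i (Finset.mem_filter.1 hi).1
    · rw [Finset.sum_filter_ne_zero, hw1]; exact one_pos
    · intro i hi
      obtain ⟨hiu, hwne⟩ := Finset.mem_filter.1 hi
      rcases mul_eq_zero.1 (hzero i hiu) with h | h
      · exact absurd h hwne
      · exact h3 (z i) (hz i hiu) (by linarith [sub_eq_zero.1 h])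
  · intro hx
    refine ⟨hTS' hx, fun y hy => (hSle y hy).trans (hTge x hx)⟩

lemma sum_if_coe (m k : ℕ) (hk : k < m) (c : Fin m → ℝ) :
    ∑ t : Fin m, (if (t : ℕ) = k then c t else 0) = c ⟨k, hk⟩ := by
  rw [Finset.sum_eq_single (⟨k, hk⟩ : Fin m)]
  · simp
  · intro b _ hb
    rw [if_neg]
    exact fun h => hb (Fin.ext h)
  · simp

lemma eval_vtx (n : ℕ) (c : Fin (2 * n) → ℝ) (p : ℕ × ℕ)
    (h1 : p.1 - 1 < 2 * n) (h2 : n + p.2 - 1 < 2 * n) :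
    (∑ t : Fin (2 * n), c t • (LinearMap.proj t : (Fin (2 * n) → ℝ) →ₗ[ℝ] ℝ)) (vtx n p)
      = c ⟨p.1 - 1, h1⟩ - c ⟨n + p.2 - 1, h2⟩ := by
  rw [LinearMap.sum_apply]
  simp only [LinearMap.smul_apply, LinearMap.proj_apply, smul_eq_mul, vtx]
  have key : ∀ t : Fin (2 * n),
      c t * ((if (t : ℕ) = p.1 - 1 then (1 : ℝ) else 0) -
        (if (t : ℕ) = n + p.2 - 1 then 1 else 0))
      = (if (t : ℕ) = p.1 - 1 then c t else 0) -
        (if (t : ℕ) = n + p.2 - 1 then c t else 0) := by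
    intro t; split_ifs <;> ring
  simp only [key]
  rw [Finset.sum_sub_distrib, sum_if_coe _ _ h1, sum_if_coe _ _ h2]

/-- The row profile `μ` of `L(π)` as a Young diagram. -/
def mufun (lam : ℕ → ℕ) (i : ℕ) : ℕ := lam (max (i - 1) 1) + 1

/-- `sfun μ r i`: the largest `i' ≤ r` with `i ≤ i'` and `μ i' = μ i`. -/
def sfun (μ : ℕ → ℕ) (r i : ℕ) : ℕ :=
  Nat.findGreatest (fun i' => i ≤ i' ∧ μ i' = μ i) r

/-- Coefficient vector of the exposing linear functional. -/
noncomputable def cfun (n : ℕ) (s μ : ℕ → ℕ) : Fin (2 * n) → ℝ := fun t =>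
  if (t : ℕ) < n then (((t : ℕ) + 1 : ℕ) : ℝ) - ((s ((t : ℕ) + 1) : ℕ) : ℝ) - ((μ ((t : ℕ) + 1) : ℕ) : ℝ)
  else -((((t : ℕ) - n + 1 : ℕ)) : ℝ)

lemma sfun_le (μ : ℕ → ℕ) (r i : ℕ) : sfun μ r i ≤ r := by
  unfold sfun; exact Nat.findGreatest_le r

lemma sfun_ge (μ : ℕ → ℕ) {r i : ℕ} (h : i ≤ r) : i ≤ sfun μ r i := by
  unfold sfun
  apply Nat.le_findGreatest h
  exact ⟨le_rfl, rfl⟩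

lemma sfun_val (μ : ℕ → ℕ) {r i : ℕ} (h : i ≤ r) : μ (sfun μ r i) = μ i := by
  have := Nat.findGreatest_spec (P := fun i' => i ≤ i' ∧ μ i' = μ i) (n := r) h ⟨le_rfl, rfl⟩
  exact this.2

lemma sfun_ge_of (μ : ℕ → ℕ) {r i m : ℕ} (hm : m ≤ r) (h1 : i ≤ m) (h2 : μ m = μ i) :
    m ≤ sfun μ r i := by
  unfold sfun
  apply Nat.le_findGreatest hm
  exact ⟨h1, h2⟩

lemma cfun_fst (n : ℕ) (s μ : ℕ → ℕ) (i : ℕ) (h1 : 1 ≤ i) (hin : i < n)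
    (hb : i - 1 < 2 * n) :
    cfun n s μ ⟨i - 1, hb⟩ = (i : ℝ) - (s i : ℝ) - (μ i : ℝ) := by
  show (if i - 1 < n then (((i - 1) + 1 : ℕ) : ℝ) - ((s ((i - 1) + 1) : ℕ) : ℝ)
      - ((μ ((i - 1) + 1) : ℕ) : ℝ) else -((((i - 1) - n + 1 : ℕ)) : ℝ)) = _
  rw [if_pos (show i - 1 < n by omega), show i - 1 + 1 = i from by omega]

lemma cfun_snd (n : ℕ) (s μ : ℕ → ℕ) (j : ℕ) (h1 : 1 ≤ j) (hb : n + j - 1 < 2 * n) :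
    cfun n s μ ⟨n + j - 1, hb⟩ = -(j : ℝ) := by
  show (if n + j - 1 < n then _ else -(((n + j - 1 - n + 1 : ℕ)) : ℝ)) = _
  rw [if_neg (show ¬(n + j - 1 < n) by omega), show n + j - 1 - n + 1 = j from by omega]

theorem stmt11 (n : ℕ) (hn : 1 ≤ n) (π : Equiv.Perm ℕ) (hπ : IsPermOn n π)
    (ℓ : ℕ) (lam : ℕ → ℕ) (hdom : DominantOne π ℓ lam) :
    ∃ f : (Fin (2 * n) → ℝ) →ₗ[ℝ] ℝ,
      {x ∈ convexHull ℝ (vtx n '' Lset π) |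
          ∀ y ∈ convexHull ℝ (vtx n '' Lset π), f y ≤ f x} =
        convexHull ℝ (vtx n '' EssSet π) := by
  obtain ⟨hπ1, hℓ, hmono, hpos, hRD⟩ := hdom
  -- notation
  let r : ℕ := ℓ + 1
  let μ : ℕ → ℕ := mufun lam
  let s : ℕ → ℕ := sfun μ r
  have hrdef : r = ℓ + 1 := rfl
  have hμdef : ∀ i, μ i = lam (max (i - 1) 1) + 1 := fun i => rfl
  -- π maps [1,n] into [1,n]
  have hπmap : ∀ i, 1 ≤ i → i ≤ n → 1 ≤ π i ∧ π i ≤ n := by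
    intro i h1 h2
    by_contra h
    have hfix : π (π i) = π i := hπ (π i) h
    have heq : π i = i := π.injective hfix
    rw [heq] at h
    exact h ⟨h1, h2⟩
  -- boxes of RD lie strictly inside [1,n)×[1,n)
  have hbound : ∀ p ∈ RD π, p.1 < n ∧ p.2 < n := by
    intro p hp
    obtain ⟨i, j, hij, hlt, rfl⟩ := hp
    have hπin : π i ≤ n ∧ j ≤ n := by
      constructor
      · by_cases hi : 1 ≤ i ∧ i ≤ n
        · exact (hπmap i hi.1 hi.2).2
        · have := hπ i hi
          by_cases hj : 1 ≤ j ∧ j ≤ n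
          · have := (hπmap j hj.1 hj.2).1; omega
          · have := hπ j hj; omega
      · by_contra hjn
        push_neg at hjn
        have hπj : π j = j := hπ j (by omega)
        by_cases hi : 1 ≤ i ∧ i ≤ n
        · have := (hπmap i hi.1 hi.2).2; omega
        · have := hπ i hi; omega
    exact ⟨by omega, by omega⟩
  have hmemRD : ∀ a b : ℕ, 1 ≤ a → a ≤ ℓ → 1 ≤ b → b ≤ lam a →
      ((a + 1 : ℕ), (b + 1 : ℕ)) ∈ RD π := by
    intro a b h1 h2 h3 h4
    rw [hRD]
    exact ⟨a, b, h1, h2, h3, h4, rfl⟩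
  have hrn : r < n := by
    have := (hbound (ℓ + 1, 2) (hmemRD ℓ 1 hℓ le_rfl le_rfl (hpos ℓ hℓ le_rfl))).1
    omega
  have hl1n : lam 1 + 1 < n :=
    (hbound (2, lam 1 + 1) (hmemRD 1 (lam 1) le_rfl hℓ (hpos 1 le_rfl hℓ) le_rfl)).2
  -- μ facts
  have hμmono : ∀ a b, 1 ≤ a → a ≤ b → b ≤ r → μ b ≤ μ a := by
    intro a b h1 h2 h3
    rw [hμdef, hμdef]
    have := hmono (max (a - 1) 1) (max (b - 1) 1) (le_max_right _ _) (by omega) (by omega)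
    omega
  have hμval : ∀ a, 1 ≤ a → μ (a + 1) = lam a + 1 := by
    intro a ha
    rw [hμdef, show max (a + 1 - 1) 1 = a from by omega]
  have hμpos : ∀ i, 1 ≤ μ i := by
    intro i; rw [hμdef]; omega
  have hμ12 : μ 2 = μ 1 := by
    rw [hμdef, hμdef]; norm_num
  have hμ1 : μ 1 = lam 1 + 1 := by rw [hμdef]; norm_num
  -- s facts
  have hs_le : ∀ i, s i ≤ r := fun i => sfun_le μ r i
  have hs_ge : ∀ i, i ≤ r → i ≤ s i := fun i h2 => sfun_ge μ h2
  have hs_val : ∀ i, i ≤ r → μ (s i) = μ i := fun i h2 => sfun_val μ h2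
  have hcorner_of : ∀ i, 2 ≤ i → i ≤ r → (i = r ∨ μ (i + 1) < μ i) → s i = i := by
    intro i h2 hir hcond
    by_contra hne
    have h1' : i < s i := lt_of_le_of_ne (hs_ge i hir) (Ne.symm hne)
    have hilt : i < r := lt_of_lt_of_le h1' (hs_le i)
    have hμlt : μ (i + 1) < μ i := hcond.resolve_left (by omega)
    have hm := hμmono (i + 1) (s i) (by omega) h1' (hs_le i)
    have hv := hs_val i hir
    omega
  have hof_corner : ∀ i, 1 ≤ i → i ≤ r → s i = i → 2 ≤ i ∧ (i = r ∨ μ (i + 1) < μ i) := by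
    intro i h1 hir hsi
    have h2 : 2 ≤ i := by
      by_contra h
      have hi1 : i = 1 := by omega
      subst hi1
      have : 2 ≤ s 1 := sfun_ge_of μ (by omega) (by omega) hμ12
      omega
    refine ⟨h2, ?_⟩
    by_cases hir' : i = r
    · exact Or.inl hir'
    · right
      have hi1r : i + 1 ≤ r := by omega
      have hle : μ (i + 1) ≤ μ i := hμmono i (i + 1) (by omega) (by omega) hi1r
      rcases lt_or_eq_of_le hle with h | h
      · exact h
      · exfalso
        have : i + 1 ≤ s i := sfun_ge_of μ hi1r (by omega) h
        omega
  -- characterization of L(π)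
  have hLset : Lset π = {p | ∃ i j : ℕ, 1 ≤ i ∧ i ≤ r ∧ 1 ≤ j ∧ j ≤ μ i ∧ p = (i, j)} := by
    have hdomempty : domPiece π = ∅ := by
      ext q
      simp only [domPiece, Set.mem_setOf_eq, Set.mem_empty_iff_false, iff_false, not_and]
      intro h11
      exfalso
      rw [hRD] at h11
      obtain ⟨i, j, hi1, hi2, hj1, hj2, hpe⟩ := h11
      rw [Prod.mk.injEq] at hpe
      omega
    rw [Lset, hdomempty, Set.diff_empty, NWset]
    ext p
    simp only [Set.mem_setOf_eq]
    constructor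
    · rintro ⟨hp1, hp2, q, hq, hle1, hle2⟩
      rw [hRD] at hq
      obtain ⟨a, b, ha1, ha2, hb1, hb2, rfl⟩ := hq
      have hle1' : p.1 ≤ a + 1 := hle1
      have hle2' : p.2 ≤ b + 1 := hle2
      refine ⟨p.1, p.2, hp1, by omega, hp2, ?_, rfl⟩
      have := hmono (max (p.1 - 1) 1) a (le_max_right _ _) (by omega) ha2
      rw [hμdef]
      omega
    · rintro ⟨i, j, h1, h2, h3, h4, rfl⟩
      refine ⟨h1, h3, (max (i - 1) 1 + 1, lam (max (i - 1) 1) + 1), ?_,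
        show i ≤ max (i - 1) 1 + 1 by omega, ?_⟩
      · rw [hRD]
        exact ⟨max (i - 1) 1, lam (max (i - 1) 1), le_max_right _ _, by omega,
          hpos _ (le_max_right _ _) (by omega), le_rfl, rfl⟩
      · show j ≤ lam (max (i - 1) 1) + 1
        rw [hμdef] at h4
        omega
  -- characterization of Ess(π)
  have hEssSet : EssSet π =
      {p | ∃ i : ℕ, 2 ≤ i ∧ i ≤ r ∧ (i = r ∨ μ (i + 1) < μ i) ∧ p = (i, μ i)} := by
    ext p
    simp only [EssSet, Set.mem_setOf_eq]
    constructor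
    · rintro ⟨hp, hnb, hnr⟩
      rw [hRD] at hp
      obtain ⟨a, b, ha1, ha2, hb1, hb2, rfl⟩ := hp
      have hbla : b = lam a := by
        by_contra hne
        apply hnr
        rw [hRD]
        exact ⟨a, b + 1, ha1, ha2, by omega, by omega, rfl⟩
      subst hbla
      have hμa : μ (a + 1) = lam a + 1 := hμval a ha1
      refine ⟨a + 1, by omega, by omega, ?_, by rw [hμa]⟩
      by_cases haℓ : a = ℓ
      · left; omega
      · right
        have hstrict : lam (a + 1) < lam a := by
          by_contra hge
          push_neg at hge
          exact hnb (by
            rw [hRD]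
            exact ⟨a + 1, lam a, by omega, by omega, hpos a ha1 ha2, hge, rfl⟩)
        have hμa2 : μ (a + 1 + 1) = lam (a + 1) + 1 := hμval (a + 1) (by omega)
        omega
    · rintro ⟨i, h2, hir, hcond, rfl⟩
      have ha1 : 1 ≤ i - 1 := by omega
      have key : μ i = lam (i - 1) + 1 := by
        have := hμval (i - 1) ha1
        rwa [show i - 1 + 1 = i from by omega] at this
      have hμi1 : μ (i + 1) = lam i + 1 := hμval i (by omega)
      refine ⟨?_, ?_, ?_⟩
      · rw [hRD]
        refine ⟨i - 1, lam (i - 1), ha1, by omega, hpos (i - 1) ha1 (by omega), le_rfl, ?_⟩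
        rw [key, Prod.mk.injEq]
        exact ⟨by omega, rfl⟩
      · intro hmem
        rw [hRD] at hmem
        obtain ⟨a, b, ha1', ha2', hb1', hb2', heq⟩ := hmem
        rw [Prod.mk.injEq] at heq
        obtain ⟨h1eq, h2eq⟩ := heq
        have haa : a = i := by
          have : (i, μ i).1 + 1 = a + 1 := h1eq
          omega
        rw [haa] at hb2' ha2'
        have h2eq' : μ i = b + 1 := h2eq
        rcases hcond with hc | hc <;> omega
      · intro hmem
        rw [hRD] at hmem
        obtain ⟨a, b, ha1', ha2', hb1', hb2', heq⟩ := hmem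
        rw [Prod.mk.injEq] at heq
        obtain ⟨h1eq, h2eq⟩ := heq
        have haa : a = i - 1 := by
          have : (i, μ i).1 = a + 1 := h1eq
          omega
        rw [haa] at hb2'
        have h2eq' : μ i + 1 = b + 1 := h2eq
        omega
  -- column bound
  have hjn : ∀ i j, 1 ≤ i → i ≤ r → j ≤ μ i → j < n := by
    intro i j h1 h2 h3
    have := hμmono 1 i le_rfl h1 h2
    omega
  -- the functional
  refine ⟨∑ t : Fin (2 * n), cfun n s μ t • (LinearMap.proj t : (Fin (2 * n) → ℝ) →ₗ[ℝ] ℝ), ?_⟩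
  set F := ∑ t : Fin (2 * n), cfun n s μ t • (LinearMap.proj t : (Fin (2 * n) → ℝ) →ₗ[ℝ] ℝ)
    with hF
  have hval : ∀ i j : ℕ, 1 ≤ i → i ≤ r → 1 ≤ j → j ≤ μ i →
      F (vtx n (i, j)) = ((i : ℝ) - (s i : ℝ)) + ((j : ℝ) - (μ i : ℝ)) := by
    intro i j h1 h2 h3 h4
    have hin : i < n := by omega
    have hjn' : j < n := hjn i j h1 h2 h4
    have hb1 : (i, j).1 - 1 < 2 * n := by show i - 1 < 2 * n; omega
    have hb2 : n + (i, j).2 - 1 < 2 * n := by show n + j - 1 < 2 * n; omega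
    rw [hF, eval_vtx n _ (i, j) hb1 hb2,
      cfun_fst n s μ i h1 hin hb1, cfun_snd n s μ j h3 hb2]
    ring
  have key1 : ∀ p ∈ Lset π, F (vtx n p) ≤ 0 := by
    intro p hp
    rw [hLset] at hp
    obtain ⟨i, j, h1, h2, h3, h4, rfl⟩ := hp
    rw [hval i j h1 h2 h3 h4]
    have a1 : (i : ℝ) ≤ (s i : ℝ) := Nat.cast_le.2 (hs_ge i h2)
    have a2 : (j : ℝ) ≤ (μ i : ℝ) := Nat.cast_le.2 h4
    linarith
  have key3 : ∀ p ∈ Lset π, F (vtx n p) = 0 → p ∈ EssSet π := by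
    intro p hp h0
    rw [hLset] at hp
    obtain ⟨i, j, h1, h2, h3, h4, rfl⟩ := hp
    rw [hval i j h1 h2 h3 h4] at h0
    have a1 : (i : ℝ) ≤ (s i : ℝ) := Nat.cast_le.2 (hs_ge i h2)
    have a2 : (j : ℝ) ≤ (μ i : ℝ) := Nat.cast_le.2 h4
    have b1 : (i : ℝ) = (s i : ℝ) := by linarith
    have b2 : (j : ℝ) = (μ i : ℝ) := by linarith
    have hsi : s i = i := (Nat.cast_injective b1).symm
    have hjμ : j = μ i := Nat.cast_injective b2
    subst hjμ
    obtain ⟨h2i, hcond⟩ := hof_corner i h1 h2 hsi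
    rw [hEssSet]
    exact ⟨i, h2i, h2, hcond, rfl⟩
  have key2 : ∀ q ∈ vtx n '' EssSet π, F q = 0 := by
    rintro q ⟨p, hp, rfl⟩
    rw [hEssSet] at hp
    obtain ⟨i, h2i, hir, hcond, rfl⟩ := hp
    rw [hval i (μ i) (by omega) hir (hμpos i) le_rfl]
    rw [hcorner_of i h2i hir hcond]
    ring
  have hsub : EssSet π ⊆ Lset π := by
    intro p hp
    rw [hEssSet] at hp
    rw [hLset]
    obtain ⟨i, h2i, hir, hcond, rfl⟩ := hp
    exact ⟨i, μ i, by omega, hir, hμpos i, le_rfl, rfl⟩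
  have hne : (vtx n '' EssSet π).Nonempty := by
    refine ⟨vtx n (r, μ r), ⟨(r, μ r), ?_, rfl⟩⟩
    rw [hEssSet]
    exact ⟨r, by omega, le_rfl, Or.inl rfl, rfl⟩
  exact face_lemma (vtx n '' Lset π) (vtx n '' EssSet π) F 0
    (Set.image_mono (f := vtx n) hsub) hne
    (by rintro q ⟨p, hp, rfl⟩; exact key1 p hp)
    key2
    (by rintro q ⟨p, hp, rfl⟩ h0; exact ⟨p, key3 p hp h0, rfl⟩)
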